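/- Extremal-half dichotomy (order preserved or reversed): Let S and S' be open connected subsets of ℝ^d and h : S → S' a smooth diffeomorphism. Let A be a discrete coordination on S whose axis-separator set 𝒢(A) has a backbone, let B be a discrete coordination on S', and suppose h(grid_S(A)) = grid_{S'}(B). Then there exists a permutation σ of {1,…,d} such that for every i, with j = σ(i) and K := n_i = m_j, exactly one of the following holds: either h(Γ_S⁻(i,A_{i,1})) = Γ_{S'}⁻(j,B_{j,1}) and h(Γ_S⁺(i,A_{i,K})) = Γ_{S'}⁺(j,B_{j,K}), or h(Γ_S⁻(i,A_{i,1})) = Γ_{S'}⁺(j,B_{j,K}) and h(Γ_S⁺(i,A_{i,K})) = Γ_{S'}⁻(j,B_{j,1}). -/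

import Mathlib

open Set MeasureTheory Topology

noncomputable section

abbrev Euc (d : ℕ) := EuclideanSpace ℝ (Fin d)

/-- Axis separator: points of `S` whose `i`-th coordinate equals `τ`. -/
def Gamma {d : ℕ} (S : Set (Euc d)) (i : Fin d) (τ : ℝ) : Set (Euc d) :=
  {z | z ∈ S ∧ z i = τ}

/-- Positive half: points of `S` whose `i`-th coordinate is greater than `τ`. -/
def GammaPos {d : ℕ} (S : Set (Euc d)) (i : Fin d) (τ : ℝ) : Set (Euc d) :=
  {z | z ∈ S ∧ τ < z i}

/-- Negative half: points of `S` whose `i`-th coordinate is less than `τ`. -/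
def GammaNeg {d : ℕ} (S : Set (Euc d)) (i : Fin d) (τ : ℝ) : Set (Euc d) :=
  {z | z ∈ S ∧ z i < τ}

/-- `Γ_S(i,τ)` is an axis-separator of `S`: it is nonempty and connected, and both of
its halves are nonempty and connected. (`IsConnected` includes nonemptiness.) -/
def IsAxisSeparator {d : ℕ} (S : Set (Euc d)) (i : Fin d) (τ : ℝ) : Prop :=
  IsConnected (Gamma S i τ) ∧ IsConnected (GammaPos S i τ) ∧ IsConnected (GammaNeg S i τ)

/-- A smooth diffeomorphism from `S` onto `S'` with explicit inverse `hinv`. -/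
structure IsSmoothDiffeoOn {d : ℕ} (h hinv : Euc d → Euc d) (S S' : Set (Euc d)) : Prop where
  mapsTo : Set.MapsTo h S S'
  mapsTo_inv : Set.MapsTo hinv S' S
  left_inv : ∀ z ∈ S, hinv (h z) = z
  right_inv : ∀ z' ∈ S', h (hinv z') = z'
  smooth : ContDiffOn ℝ (⊤ : ℕ∞) h S
  smooth_inv : ContDiffOn ℝ (⊤ : ℕ∞) hinv S'

/-- A discrete coordination on `S`: for each axis `i`, a strictly increasing nonempty tuple
of thresholds, each giving an axis-separator of `S`. -/
structure DiscreteCoordination {d : ℕ} (S : Set (Euc d)) where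
  n : Fin d → ℕ
  n_pos : ∀ i, 0 < n i
  A : (i : Fin d) → Fin (n i) → ℝ
  mono : ∀ i, StrictMono (A i)
  sep : ∀ i k, IsAxisSeparator S i (A i k)

/-- The grid of a discrete coordination: the union of all its axis-separators. -/
def DiscreteCoordination.grid {d : ℕ} {S : Set (Euc d)} (C : DiscreteCoordination S) :
    Set (Euc d) :=
  ⋃ (i : Fin d), ⋃ (k : Fin (C.n i)), Gamma S i (C.A i k)

/-- The parallel-separator-set along axis `i`. -/
def DiscreteCoordination.axisSet {d : ℕ} {S : Set (Euc d)} (C : DiscreteCoordination S)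
    (i : Fin d) : Set (Set (Euc d)) :=
  {H | ∃ k : Fin (C.n i), H = Gamma S i (C.A i k)}

/-- The axis-separator set of a discrete coordination. -/
def DiscreteCoordination.sepSet {d : ℕ} {S : Set (Euc d)} (C : DiscreteCoordination S) :
    Set (Set (Euc d)) :=
  {H | ∃ (i : Fin d) (k : Fin (C.n i)), H = Gamma S i (C.A i k)}

/-- A backbone: a choice of one separator per axis such that they all meet in a single
point and each of them meets every separator of the grid lying on a different axis. -/
def DiscreteCoordination.HasBackbone {d : ℕ} {S : Set (Euc d)}
    (C : DiscreteCoordination S) : Prop :=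
  ∃ kstar : (i : Fin d) → Fin (C.n i),
    (∃ z : Euc d, (⋂ (i : Fin d), Gamma S i (C.A i (kstar i))) = {z}) ∧
    ∀ (i j : Fin d), j ≠ i → ∀ k : Fin (C.n j),
      (Gamma S i (C.A i (kstar i)) ∩ Gamma S j (C.A j k)).Nonempty

/-- Quantization: `Q(x;T) = Σ_k 1[x ≥ T_k]`. -/
def Q {K : ℕ} (x : ℝ) (T : Fin K → ℝ) : ℕ :=
  (Finset.univ.filter fun k : Fin K => T k ≤ x).card

/-- Quantization with order reversal: `Q⁻(x;T) = Σ_k 1[x ≤ T_k]`. -/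
def Qneg {K : ℕ} (x : ℝ) (T : Fin K → ℝ) : ℕ :=
  (Finset.univ.filter fun k : Fin K => x ≤ T k).card

/-- Signed quantization: `Q^{+1} = Q` and `Q^{-1} = Q⁻`. -/
def Qsgn {K : ℕ} (s : ℤ) (x : ℝ) (T : Fin K → ℝ) : ℕ :=
  if s = 1 then Q x T else Qneg x T

/-- `μ` (absolutely continuous w.r.t. Lebesgue) has a non-removable discontinuity at `z`
if every measurable density of `μ` w.r.t. Lebesgue measure is discontinuous at `z`. -/
def HasNonRemovableDiscont {d : ℕ} (μ : Measure (Euc d)) (z : Euc d) : Prop :=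
  ∀ q : Euc d → ENNReal, Measurable q → μ = volume.withDensity q → ¬ ContinuousAt q z

/-- `T` has exactly two connected components, namely `Cp` and `Cm`. -/
def TwoComponents {d : ℕ} (T Cp Cm : Set (Euc d)) : Prop :=
  Cp ≠ Cm ∧
  (∃ x ∈ T, connectedComponentIn T x = Cp) ∧
  (∃ x ∈ T, connectedComponentIn T x = Cm) ∧
  ∀ x ∈ T, connectedComponentIn T x = Cp ∨ connectedComponentIn T x = Cm

/-- The intersection set of a finite family of separators: points lying on at least two
distinct members. -/
def interSet {d M : ℕ} (H : Fin M → Set (Euc d)) : Set (Euc d) :=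
  ⋃ (m : Fin M), ⋃ (m' : Fin M), ⋃ (_ : m ≠ m'), H m ∩ H m'


/-! ### Auxiliary lemmas for the proof -/

section EHDAux

lemma EHD.dense_aux {X : Type*} [MetricSpace X] {ι : Type*} [DecidableEq ι]
    (Γ : Set X) (g : ι → X → ℝ) (v : ι → ℝ)
    (hg : ∀ t, ∀ z ∈ Γ, ContinuousAt (g t) z) :
    ∀ (T : Finset ι), ∀ z₀ ∈ Γ, ∀ r > 0,
      (∀ z' ∈ Γ, dist z' z₀ < r → ∃ t ∈ T, g t z' = v t) →
      ∃ z₁ ∈ Γ, dist z₁ z₀ < r ∧ ∃ t ∈ T, ∃ δ > 0,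
        ∀ z' ∈ Γ, dist z' z₁ < δ → g t z' = v t := by
  classical
  intro T
  induction T using Finset.strongInduction with
  | _ T ih =>
    intro z₀ hz₀ r hr hcov
    by_contra H
    push_neg at H
    obtain ⟨t₀, ht₀T, _⟩ := hcov z₀ hz₀ (by simpa using hr)
    obtain ⟨z', hz', hz'r, hne⟩ := H z₀ hz₀ (by simpa using hr) t₀ ht₀T r hr
    have hev : ∀ᶠ z'' in 𝓝 z', g t₀ z'' ≠ v t₀ :=
      (hg t₀ z' hz').eventually_ne hne
    obtain ⟨δ', hδ', hball⟩ := Metric.eventually_nhds_iff_ball.mp hev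
    set ρ : ℝ := min δ' (r - dist z' z₀) with hρdef
    have hρ : 0 < ρ := lt_min hδ' (by linarith)
    have hcov' : ∀ z'' ∈ Γ, dist z'' z' < ρ → ∃ t ∈ T.erase t₀, g t z'' = v t := by
      intro z'' hz'' hd
      have hd0 : dist z'' z₀ < r := by
        have := dist_triangle z'' z' z₀
        have h1 : dist z'' z' < r - dist z' z₀ := lt_of_lt_of_le hd (min_le_right _ _)
        linarith
      obtain ⟨t, htT, hteq⟩ := hcov z'' hz'' hd0
      refine ⟨t, Finset.mem_erase.mpr ⟨?_, htT⟩, hteq⟩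
      intro hteq0
      exact hball z'' (by simpa [Metric.mem_ball] using lt_of_lt_of_le hd (min_le_left _ _))
        (hteq0 ▸ hteq)
    obtain ⟨z₁, hz₁, hz₁d, t, htm, δ, hδ, hloc⟩ :=
      ih (T.erase t₀) (Finset.erase_ssubset ht₀T) z' hz' ρ hρ hcov'
    have hz₁r : dist z₁ z₀ < r := by
      have := dist_triangle z₁ z' z₀
      have h1 : dist z₁ z' < r - dist z' z₀ := lt_of_lt_of_le hz₁d (min_le_right _ _)
      linarith
    obtain ⟨zbad, hzbad, hzbadd, hbad⟩ :=
      H z₁ hz₁ hz₁r t (Finset.mem_of_mem_erase htm) δ hδ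
    exact hbad (hloc zbad hzbad hzbadd)

variable {d : ℕ} {S S' : Set (Euc d)} {h hinv : Euc d → Euc d}

lemma EHD.diffeoSymm (hd : IsSmoothDiffeoOn h hinv S S') :
    IsSmoothDiffeoOn hinv h S' S :=
  ⟨hd.mapsTo_inv, hd.mapsTo, hd.right_inv, hd.left_inv, hd.smooth_inv, hd.smooth⟩

lemma EHD.diffeo_injOn (hd : IsSmoothDiffeoOn h hinv S S') : Set.InjOn h S := by
  intro a ha b hb hab
  rw [← hd.left_inv a ha, hab, hd.left_inv b hb]

lemma EHD.diffeo_img_img (hd : IsSmoothDiffeoOn h hinv S S') {X : Set (Euc d)} (hX : X ⊆ S) :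
    hinv '' (h '' X) = X := by
  rw [Set.image_image]
  have : ∀ a ∈ X, hinv (h a) = a := fun a ha => hd.left_inv a (hX ha)
  calc (fun a => hinv (h a)) '' X = id '' X := Set.image_congr this
    _ = X := Set.image_id X

lemma EHD.diffeo_img_univ (hd : IsSmoothDiffeoOn h hinv S S') : h '' S = S' := by
  apply Set.Subset.antisymm (hd.mapsTo.image_subset)
  intro z' hz'
  exact ⟨hinv z', hd.mapsTo_inv hz', hd.right_inv z' hz'⟩

lemma EHD.diffeo_img_diff (hd : IsSmoothDiffeoOn h hinv S S') {X : Set (Euc d)} (hX : X ⊆ S) :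
    h '' (S \ X) = S' \ h '' X := by
  rw [(EHD.diffeo_injOn hd).image_diff_subset hX, EHD.diffeo_img_univ hd]

lemma EHD.diffeo_diffAt (hS : IsOpen S) (hd : IsSmoothDiffeoOn h hinv S S') {z : Euc d}
    (hz : z ∈ S) : DifferentiableAt ℝ h z :=
  (hd.smooth.contDiffAt (hS.mem_nhds hz)).differentiableAt (by simp)

lemma EHD.diffeo_contAt (hS : IsOpen S) (hd : IsSmoothDiffeoOn h hinv S S') {z : Euc d}
    (hz : z ∈ S) : ContinuousAt h z :=
  (EHD.diffeo_diffAt hS hd hz).continuousAt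

lemma EHD.fderiv_comp_right (hS : IsOpen S) (hS' : IsOpen S')
    (hd : IsSmoothDiffeoOn h hinv S S') {z' : Euc d} (hz' : z' ∈ S') :
    (fderiv ℝ h (hinv z')).comp (fderiv ℝ hinv z') = ContinuousLinearMap.id ℝ (Euc d) := by
  have hdiffinv : DifferentiableAt ℝ hinv z' := EHD.diffeo_diffAt hS' (EHD.diffeoSymm hd) hz'
  have hdiffh : DifferentiableAt ℝ h (hinv z') := EHD.diffeo_diffAt hS hd (hd.mapsTo_inv hz')
  have hcomp := fderiv_comp z' hdiffh hdiffinv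
  have hev : (h ∘ hinv) =ᶠ[𝓝 z'] id :=
    Filter.eventuallyEq_of_mem (hS'.mem_nhds hz') (fun w hw => hd.right_inv w hw)
  rw [← hcomp, hev.fderiv_eq, fderiv_id]

lemma EHD.fderiv_surj (hS : IsOpen S) (hS' : IsOpen S') (hd : IsSmoothDiffeoOn h hinv S S')
    {z : Euc d} (hz : z ∈ S) : Function.Surjective (fderiv ℝ h z) := by
  intro u
  have h1 := EHD.fderiv_comp_right hS hS' hd (hd.mapsTo hz)
  rw [hd.left_inv z hz] at h1
  refine ⟨fderiv ℝ hinv (h z) u, ?_⟩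
  have := ContinuousLinearMap.ext_iff.mp h1 u
  simpa using this

/-- Main analytic lemma: the image of an axis separator lies in a single separator of
the target coordination. -/
lemma EHD.sep_image_plane (hS : IsOpen S) (hS' : IsOpen S')
    (hd : IsSmoothDiffeoOn h hinv S S') (CB : DiscreteCoordination S')
    (i : Fin d) (τ : ℝ) (hconn : IsConnected (Gamma S i τ))
    (hmaps : ∀ z ∈ Gamma S i τ, h z ∈ CB.grid) :
    ∃ (j : Fin d) (c : Fin (CB.n j)), ∀ z ∈ Gamma S i τ, h z ∈ Gamma S' j (CB.A j c) := by
  classical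
  set Γ : Set (Euc d) := Gamma S i τ with hΓdef
  have hΓS : Γ ⊆ S := fun z hz => hz.1
  set g : (Σ j : Fin d, Fin (CB.n j)) → Euc d → ℝ := fun t z => h z t.1 with hgdef
  set v : (Σ j : Fin d, Fin (CB.n j)) → ℝ := fun t => CB.A t.1 t.2 with hvdef
  have hg : ∀ t, ∀ z ∈ Γ, ContinuousAt (g t) z := by
    intro t z hz
    exact ((EuclideanSpace.proj t.1).continuous.continuousAt).comp
      (EHD.diffeo_contAt hS hd (hΓS hz))
  have keyDense : ∀ z ∈ Γ, ∀ r > 0, ∃ z₁ ∈ Γ, dist z₁ z < r ∧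
      ∃ t, ∃ δ > 0, ∀ z' ∈ Γ, dist z' z₁ < δ → g t z' = v t := by
    intro z hz r hr
    have hcov : ∀ z' ∈ Γ, dist z' z < r →
        ∃ t ∈ (Finset.univ : Finset (Σ j : Fin d, Fin (CB.n j))), g t z' = v t := by
      intro z' hz' _
      have := hmaps z' hz'
      simp only [DiscreteCoordination.grid, Set.mem_iUnion] at this
      obtain ⟨j, c, hmem⟩ := this
      exact ⟨⟨j, c⟩, Finset.mem_univ _, hmem.2⟩
    obtain ⟨z₁, hz₁, hz₁d, t, _, δ, hδ, hloc⟩ :=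
      EHD.dense_aux Γ g v hg Finset.univ z hz r hr hcov
    exact ⟨z₁, hz₁, hz₁d, t, δ, hδ, hloc⟩
  set W : Fin d → Set (Euc d) :=
    fun j => {z | z ∈ S ∧ ∀ u : Euc d, u i = 0 → fderiv ℝ h z u j = 0} with hWdef
  have fderivContOn : ContinuousOn (fderiv ℝ h) S :=
    hd.smooth.continuousOn_fderiv_of_isOpen hS (by norm_num)
  have interior_mem : ∀ z₁ ∈ Γ, ∀ (t : Σ j : Fin d, Fin (CB.n j)), ∀ δ > 0,
      (∀ z' ∈ Γ, dist z' z₁ < δ → g t z' = v t) → z₁ ∈ W t.1 := by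
    intro z₁ hz₁ t δ hδ hloc
    refine ⟨hΓS hz₁, ?_⟩
    intro u hu
    obtain ⟨ε, hε, hball⟩ := Metric.isOpen_iff.mp hS z₁ (hΓS hz₁)
    set ε' : ℝ := min ε δ with hε'def
    have hε' : 0 < ε' := lt_min hε hδ
    set η : ℝ := ε' / (‖u‖ + 1) with hηdef
    have hηpos : 0 < η := div_pos hε' (by positivity)
    have hcurve : ∀ s : ℝ, |s| < η → (z₁ + s • u) ∈ Γ ∧ dist (z₁ + s • u) z₁ < δ := by
      intro s hs
      have hdist : dist (z₁ + s • u) z₁ < ε' := by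
        rw [dist_eq_norm, add_sub_cancel_left, norm_smul, Real.norm_eq_abs]
        calc |s| * ‖u‖ ≤ |s| * (‖u‖ + 1) := by nlinarith [abs_nonneg s, norm_nonneg u]
          _ < η * (‖u‖ + 1) := by
              have : (0:ℝ) < ‖u‖ + 1 := by positivity
              exact mul_lt_mul_of_pos_right hs this
          _ = ε' := by rw [hηdef, div_mul_cancel₀]; positivity
      refine ⟨⟨hball ?_, ?_⟩, lt_of_lt_of_le hdist (min_le_right _ _)⟩
      · exact Metric.mem_ball.mpr (lt_of_lt_of_le hdist (min_le_left _ _))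
      · have : (z₁ + s • u) i = z₁ i + s * u i := by simp
        rw [this, hu, mul_zero, add_zero]
        exact hz₁.2
    have hDer1 : HasDerivAt (fun s : ℝ => z₁ + s • u) u 0 := by
      simpa using ((hasDerivAt_id (0:ℝ)).smul_const u).const_add z₁
    have hF : HasFDerivAt h (fderiv ℝ h z₁) z₁ :=
      (EHD.diffeo_diffAt hS hd (hΓS hz₁)).hasFDerivAt
    have hF' : HasFDerivAt h (fderiv ℝ h z₁) ((fun s : ℝ => z₁ + s • u) 0) := by
      simpa using hF
    have hDer2 : HasDerivAt (fun s : ℝ => h (z₁ + s • u)) (fderiv ℝ h z₁ u) 0 := by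
      have := hF'.comp_hasDerivAt 0 hDer1
      exact this
    have hDer3 : HasDerivAt (fun s : ℝ => h (z₁ + s • u) t.1) (fderiv ℝ h z₁ u t.1) 0 := by
      have := (EuclideanSpace.proj (𝕜 := ℝ) t.1).hasFDerivAt.comp_hasDerivAt 0 hDer2
      exact this
    have hconst : (fun s : ℝ => h (z₁ + s • u) t.1) =ᶠ[𝓝 (0:ℝ)] fun _ => v t := by
      have hmem : Set.Ioo (-η) η ∈ 𝓝 (0:ℝ) := Ioo_mem_nhds (by linarith) hηpos
      filter_upwards [hmem] with s hs
      have habs : |s| < η := abs_lt.mpr ⟨hs.1, hs.2⟩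
      obtain ⟨hmem', hdist'⟩ := hcurve s habs
      exact hloc _ hmem' hdist'
    have hDer4 : HasDerivAt (fun s : ℝ => h (z₁ + s • u) t.1) 0 0 :=
      (hasDerivAt_const (0:ℝ) (v t)).congr_of_eventuallyEq hconst
    exact hDer3.unique hDer4
  have hWlim : ∀ j : Fin d, ∀ z ∈ S, z ∈ closure (W j) → z ∈ W j := by
    intro j z hzS hcl
    refine ⟨hzS, ?_⟩
    intro u hu
    have hρ : ContinuousOn (fun z' => fderiv ℝ h z' u j) S := by
      have c1 : Continuous fun L : Euc d →L[ℝ] Euc d => L u j :=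
        (EuclideanSpace.proj (𝕜 := ℝ) j).continuous.comp
          (ContinuousLinearMap.apply ℝ (Euc d) u).continuous
      exact c1.comp_continuousOn fderivContOn
    have hne : (𝓝[W j] z).NeBot := mem_closure_iff_nhdsWithin_neBot.mp hcl
    have h1 : Filter.Tendsto (fun z' => fderiv ℝ h z' u j) (𝓝[W j] z)
        (𝓝 (fderiv ℝ h z u j)) :=
      ((hρ z hzS).mono (fun y hy => hy.1)).tendsto
    have h2 : Filter.Tendsto (fun z' => fderiv ℝ h z' u j) (𝓝[W j] z) (𝓝 0) := by
      apply Filter.Tendsto.congr' ?_ tendsto_const_nhds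
      filter_upwards [self_mem_nhdsWithin] with y hy
      exact (hy.2 u hu).symm
    exact tendsto_nhds_unique h1 h2
  have hdisj : ∀ z ∈ S, ∀ j j' : Fin d, j ≠ j' → z ∈ W j → z ∈ W j' → False := by
    intro z hz j j' hjj' hWj hWj'
    have hsurj := EHD.fderiv_surj hS hS' hd hz
    have key : ∀ jj : Fin d, z ∈ W jj → ∀ u : Euc d,
        fderiv ℝ h z u jj = u i * fderiv ℝ h z (EuclideanSpace.single i (1:ℝ)) jj := by
      intro jj hW u
      have h0 : (u - u i • EuclideanSpace.single i (1:ℝ)) i = 0 := by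
        simp [EuclideanSpace.single_apply]
      have hz0 := hW.2 _ h0
      have hdec : fderiv ℝ h z u = fderiv ℝ h z (u - u i • EuclideanSpace.single i (1:ℝ))
          + u i • fderiv ℝ h z (EuclideanSpace.single i (1:ℝ)) := by
        rw [← (fderiv ℝ h z).map_smul, ← (fderiv ℝ h z).map_add]
        congr 1
        abel
      calc fderiv ℝ h z u jj = (fderiv ℝ h z (u - u i • EuclideanSpace.single i (1:ℝ))
            + u i • fderiv ℝ h z (EuclideanSpace.single i (1:ℝ))) jj := by rw [← hdec]
        _ = fderiv ℝ h z (u - u i • EuclideanSpace.single i (1:ℝ)) jj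
            + u i * fderiv ℝ h z (EuclideanSpace.single i (1:ℝ)) jj := by simp
        _ = u i * fderiv ℝ h z (EuclideanSpace.single i (1:ℝ)) jj := by rw [hz0, zero_add]
    set a : ℝ := fderiv ℝ h z (EuclideanSpace.single i (1:ℝ)) j with hadef
    set b : ℝ := fderiv ℝ h z (EuclideanSpace.single i (1:ℝ)) j' with hbdef
    obtain ⟨u₁, hu₁⟩ := hsurj (EuclideanSpace.single j (1:ℝ))
    obtain ⟨u₂, hu₂⟩ := hsurj (EuclideanSpace.single j' (1:ℝ))
    have e1 : (1:ℝ) = u₁ i * a := by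
      have := key j hWj u₁
      rw [hu₁] at this
      simpa [EuclideanSpace.single_apply] using this
    have e2 : (0:ℝ) = u₂ i * a := by
      have := key j hWj u₂
      rw [hu₂] at this
      simpa [EuclideanSpace.single_apply, hjj'] using this
    have e3 : (1:ℝ) = u₂ i * b := by
      have := key j' hWj' u₂
      rw [hu₂] at this
      simpa [EuclideanSpace.single_apply] using this
    have ha : a ≠ 0 := by
      intro h0; rw [h0, mul_zero] at e1; exact one_ne_zero e1
    have hu₂i : u₂ i = 0 := by
      rcases mul_eq_zero.mp e2.symm with h' | h'
      · exact h'
      · exact absurd h' ha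
    rw [hu₂i, zero_mul] at e3
    exact one_ne_zero e3
  have hcover : ∀ z ∈ Γ, ∃ j, z ∈ W j := by
    intro z hz
    by_contra hnone
    push_neg at hnone
    have hncl : ∀ j, z ∉ closure (W j) := fun j hc => hnone j (hWlim j z (hΓS hz) hc)
    have hop : ∀ j : Fin d, ∃ ε > 0, ∀ y ∈ W j, ¬ dist z y < ε := by
      intro j
      by_contra hcon
      push_neg at hcon
      apply hncl j
      rw [Metric.mem_closure_iff]
      intro ε hε
      obtain ⟨y, hy, hyd⟩ := hcon ε hε
      exact ⟨y, hy, hyd⟩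
    choose ε hεpos hεaway using hop
    haveI : Nonempty (Fin d) := ⟨i⟩
    set εm : ℝ := Finset.univ.inf' Finset.univ_nonempty ε with hεmdef
    have hεm : 0 < εm := by
      rw [hεmdef, Finset.lt_inf'_iff]
      exact fun j _ => hεpos j
    obtain ⟨z₁, hz₁Γ, hz₁d, t, δ, hδ, hloc⟩ := keyDense z hz εm hεm
    have hz₁W := interior_mem z₁ hz₁Γ t δ hδ hloc
    refine hεaway t.1 z₁ hz₁W ?_
    rw [dist_comm]
    exact lt_of_lt_of_le hz₁d (Finset.inf'_le _ (Finset.mem_univ _))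
  obtain ⟨zstar, hzstar⟩ := hconn.nonempty
  obtain ⟨j₀, hj₀⟩ := hcover zstar hzstar
  have hΓW : ∀ z ∈ Γ, z ∈ W j₀ := by
    set U : Set (Euc d) := S ∩ ⋂ (j : Fin d) (_ : j ≠ j₀), (closure (W j))ᶜ with hUdef
    set V : Set (Euc d) := S ∩ (closure (W j₀))ᶜ with hVdef
    have hUopen : IsOpen U := hS.inter (isOpen_iInter_of_finite fun j =>
      isOpen_iInter_of_finite fun _ => isClosed_closure.isOpen_compl)
    have hVopen : IsOpen V := hS.inter isClosed_closure.isOpen_compl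
    have hmemU : ∀ z ∈ Γ, z ∈ W j₀ → z ∈ U := by
      intro z hz hW
      refine ⟨hΓS hz, ?_⟩
      simp only [Set.mem_iInter, Set.mem_compl_iff]
      intro j hj hcl
      exact hdisj z (hΓS hz) j j₀ hj (hWlim j z (hΓS hz) hcl) hW
    have hmemV : ∀ z ∈ Γ, ∀ j : Fin d, j ≠ j₀ → z ∈ W j → z ∈ V := by
      intro z hz j hj hW
      refine ⟨hΓS hz, fun hcl => ?_⟩
      exact hdisj z (hΓS hz) j₀ j (Ne.symm hj) (hWlim j₀ z (hΓS hz) hcl) hW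
    have hsub : Γ ⊆ U ∪ V := by
      intro z hz
      obtain ⟨j, hW⟩ := hcover z hz
      by_cases hj : j = j₀
      · exact Or.inl (hmemU z hz (hj ▸ hW))
      · exact Or.inr (hmemV z hz j hj hW)
    have hempty : ¬ (Γ ∩ (U ∩ V)).Nonempty := by
      rintro ⟨z, hzΓ, hzU, hzV⟩
      obtain ⟨j, hW⟩ := hcover z hzΓ
      by_cases hj : j = j₀
      · exact hzV.2 (subset_closure (hj ▸ hW))
      · have := Set.mem_iInter.mp (Set.mem_iInter.mp hzU.2 j) hj
        exact this (subset_closure hW)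
    intro z hz
    by_cases hzV : z ∈ V
    · have hU : (Γ ∩ U).Nonempty := ⟨zstar, hzstar, hmemU zstar hzstar hj₀⟩
      have hV : (Γ ∩ V).Nonempty := ⟨z, hz, hzV⟩
      exact absurd (hconn.isPreconnected U V hUopen hVopen hsub hU hV) hempty
    · have : z ∈ closure (W j₀) := by
        by_contra hc
        exact hzV ⟨hΓS hz, hc⟩
      exact hWlim j₀ z (hΓS hz) this
  set φ : Euc d → ℝ := fun z => h z j₀ with hφdef
  set Tset : Set ℝ := Set.range (CB.A j₀) with hTdef
  have hTfin : Tset.Finite := Set.finite_range _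
  have hφcont : ContinuousOn φ S := by
    intro z hz
    exact (((EuclideanSpace.proj (𝕜 := ℝ) j₀).continuous.continuousAt).comp
      (EHD.diffeo_contAt hS hd hz)).continuousWithinAt
  have hφT : ∀ z ∈ Γ, φ z ∈ Tset := by
    intro z hz
    set D : Set (Euc d) := {z' | z' ∈ Γ ∧ φ z' ∈ Tset} with hDdef
    have hclD : z ∈ closure D := by
      rw [Metric.mem_closure_iff]
      intro ε hε
      obtain ⟨z₁, hz₁Γ, hz₁d, ⟨j1, c1⟩, δ, hδ, hloc⟩ := keyDense z hz ε hε
      have hz₁W := interior_mem z₁ hz₁Γ ⟨j1, c1⟩ δ hδ hloc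
      have hj : j1 = j₀ := by
        by_contra hne
        exact hdisj z₁ (hΓS hz₁Γ) j1 j₀ hne hz₁W (hΓW z₁ hz₁Γ)
      subst hj
      have hval : φ z₁ = CB.A j1 c1 := hloc z₁ hz₁Γ (by simpa using hδ)
      refine ⟨z₁, ⟨hz₁Γ, ?_⟩, by rw [dist_comm]; exact hz₁d⟩
      rw [hval]
      exact ⟨c1, rfl⟩
    have hne : (𝓝[D] z).NeBot := mem_closure_iff_nhdsWithin_neBot.mp hclD
    have h1 : Filter.Tendsto φ (𝓝[D] z) (𝓝 (φ z)) :=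
      ((hφcont z (hΓS hz)).mono (fun y hy => hΓS hy.1)).tendsto
    have h2 : ∀ᶠ y in 𝓝[D] z, φ y ∈ Tset := by
      filter_upwards [self_mem_nhdsWithin] with y hy
      exact hy.2
    exact hTfin.isClosed.mem_of_tendsto h1 h2
  have himgpc : IsPreconnected (φ '' Γ) :=
    hconn.isPreconnected.image φ (hφcont.mono hΓS)
  have hsub2 : φ '' Γ ⊆ Tset := by
    rintro _ ⟨z, hz, rfl⟩
    exact hφT z hz
  have hss : (φ '' Γ).Subsingleton := by
    intro x hx y hy
    by_contra hxy
    rcases lt_or_gt_of_ne hxy with hlt | hlt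
    · have hIcc := himgpc.Icc_subset hx hy
      exact (Set.Icc_infinite hlt) ((hTfin.subset hsub2).subset hIcc)
    · have hIcc := himgpc.Icc_subset hy hx
      exact (Set.Icc_infinite hlt) ((hTfin.subset hsub2).subset hIcc)
  obtain ⟨c₀, hc₀⟩ := hφT zstar hzstar
  refine ⟨j₀, c₀, ?_⟩
  intro z hz
  refine ⟨hd.mapsTo (hΓS hz), ?_⟩
  have heq : φ z = φ zstar := hss ⟨z, hz, rfl⟩ ⟨zstar, hzstar, rfl⟩
  show h z j₀ = CB.A j₀ c₀
  rw [show h z j₀ = φ z from rfl, heq, ← hc₀]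

lemma EHD.gamma_nested (hS : IsOpen S) {i i' : Fin d} {τ τ' : ℝ}
    (hne : (Gamma S i τ).Nonempty) (hsub : Gamma S i τ ⊆ Gamma S i' τ') :
    i = i' ∧ τ = τ' := by
  obtain ⟨z, hzS, hzi⟩ := hne
  have hz' : z i' = τ' := (hsub ⟨hzS, hzi⟩).2
  by_cases hii : i = i'
  · subst hii
    exact ⟨rfl, by rw [← hzi, hz']⟩
  · exfalso
    obtain ⟨ε, hε, hball⟩ := Metric.isOpen_iff.mp hS z hzS
    set z2 : Euc d := z + (ε/2) • EuclideanSpace.single i' (1:ℝ) with hz2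
    have hz2S : z2 ∈ S := by
      apply hball
      rw [Metric.mem_ball, dist_eq_norm, hz2, add_sub_cancel_left, norm_smul]
      simp [abs_of_pos hε]
      linarith
    have hz2i : z2 i = τ := by
      have : z2 i = z i + (ε/2) * (EuclideanSpace.single i' (1:ℝ)) i := by simp [hz2]
      rw [this, EuclideanSpace.single_apply, if_neg hii, mul_zero, add_zero, hzi]
    have hz2i' : z2 i' = τ' := (hsub ⟨hz2S, hz2i⟩).2
    have : z2 i' = z i' + (ε/2) * 1 := by
      simp [hz2, EuclideanSpace.single_apply]
    rw [hz2i', hz'] at this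
    linarith

lemma EHD.gamma_congr {T : Set (Euc d)} {a a' : Fin d} {v v' : ℝ} (ha : a = a')
    (hv : v = v') : Gamma T a v = Gamma T a' v' := by
  subst ha; subst hv; rfl

lemma EHD.gammaPos_open (hS : IsOpen S) (i : Fin d) (τ : ℝ) : IsOpen (GammaPos S i τ) := by
  have : GammaPos S i τ = S ∩ (fun z : Euc d => z i) ⁻¹' (Set.Ioi τ) := rfl
  rw [this]
  exact hS.inter (isOpen_Ioi.preimage (EuclideanSpace.proj (𝕜 := ℝ) i).continuous)

lemma EHD.gammaNeg_open (hS : IsOpen S) (i : Fin d) (τ : ℝ) : IsOpen (GammaNeg S i τ) := by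
  have : GammaNeg S i τ = S ∩ (fun z : Euc d => z i) ⁻¹' (Set.Iio τ) := rfl
  rw [this]
  exact hS.inter (isOpen_Iio.preimage (EuclideanSpace.proj (𝕜 := ℝ) i).continuous)

lemma EHD.gamma_union (i : Fin d) (τ : ℝ) :
    GammaPos S i τ ∪ GammaNeg S i τ = S \ Gamma S i τ := by
  ext z
  constructor
  · rintro (⟨hz, hlt⟩ | ⟨hz, hlt⟩)
    · exact ⟨hz, fun hm => by rw [hm.2] at hlt; exact lt_irrefl _ hlt⟩
    · exact ⟨hz, fun hm => by rw [hm.2] at hlt; exact lt_irrefl _ hlt⟩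
  · rintro ⟨hz, hnm⟩
    rcases lt_trichotomy (z i) τ with hlt | heq | hgt
    · exact Or.inr ⟨hz, hlt⟩
    · exact absurd ⟨hz, heq⟩ hnm
    · exact Or.inl ⟨hz, hgt⟩

lemma EHD.half_dichotomy (hS : IsOpen S) (hS' : IsOpen S')
    (hd : IsSmoothDiffeoOn h hinv S S') {i j : Fin d} {τ τ' : ℝ}
    (hsep : IsAxisSeparator S i τ) (hsep' : IsAxisSeparator S' j τ')
    (himg : h '' Gamma S i τ = Gamma S' j τ') :
    (h '' GammaNeg S i τ = GammaNeg S' j τ' ∧ h '' GammaPos S i τ = GammaPos S' j τ') ∨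
    (h '' GammaNeg S i τ = GammaPos S' j τ' ∧ h '' GammaPos S i τ = GammaNeg S' j τ') := by
  set U : Set (Euc d) := h '' GammaPos S i τ with hU
  set V : Set (Euc d) := h '' GammaNeg S i τ with hV
  have hPosS : GammaPos S i τ ⊆ S := fun z hz => hz.1
  have hNegS : GammaNeg S i τ ⊆ S := fun z hz => hz.1
  have hdisjUV : Disjoint U V := by
    rw [Set.disjoint_iff_inter_eq_empty, hU, hV,
      ← (EHD.diffeo_injOn hd).image_inter hPosS hNegS]
    convert Set.image_empty h
    ext z
    simp only [Set.mem_inter_iff, Set.mem_empty_iff_false, iff_false]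
    rintro ⟨⟨_, h1⟩, ⟨_, h2⟩⟩
    exact lt_asymm h1 h2
  have hUVeq : U ∪ V = S' \ Gamma S' j τ' := by
    rw [hU, hV, ← Set.image_union, EHD.gamma_union,
      EHD.diffeo_img_diff hd (fun z hz => hz.1), himg]
  have hUeq : U = S' ∩ hinv ⁻¹' (GammaPos S i τ) := by
    ext w
    constructor
    · rintro ⟨z, hz, rfl⟩
      exact ⟨hd.mapsTo (hPosS hz),
        by rw [Set.mem_preimage, hd.left_inv z (hPosS hz)]; exact hz⟩
    · rintro ⟨hw, hw2⟩
      exact ⟨hinv w, hw2, hd.right_inv w hw⟩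
  have hVeq : V = S' ∩ hinv ⁻¹' (GammaNeg S i τ) := by
    ext w
    constructor
    · rintro ⟨z, hz, rfl⟩
      exact ⟨hd.mapsTo (hNegS hz),
        by rw [Set.mem_preimage, hd.left_inv z (hNegS hz)]; exact hz⟩
    · rintro ⟨hw, hw2⟩
      exact ⟨hinv w, hw2, hd.right_inv w hw⟩
  have hUopen : IsOpen U := by
    rw [hUeq]
    exact (EHD.diffeoSymm hd).smooth.continuousOn.isOpen_inter_preimage hS'
      (EHD.gammaPos_open hS i τ)
  have hVopen : IsOpen V := by
    rw [hVeq]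
    exact (EHD.diffeoSymm hd).smooth.continuousOn.isOpen_inter_preimage hS'
      (EHD.gammaNeg_open hS i τ)
  have hUne : U.Nonempty := (hsep.2.1.nonempty).image h
  have hVne : V.Nonempty := (hsep.2.2.nonempty).image h
  have hPos'sub : GammaPos S' j τ' ⊆ U ∪ V := by
    rw [hUVeq]
    rintro z ⟨hz, hlt⟩
    exact ⟨hz, fun hm => by rw [hm.2] at hlt; exact lt_irrefl _ hlt⟩
  have hNeg'sub : GammaNeg S' j τ' ⊆ U ∪ V := by
    rw [hUVeq]
    rintro z ⟨hz, hlt⟩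
    exact ⟨hz, fun hm => by rw [hm.2] at hlt; exact lt_irrefl _ hlt⟩
  have hdisjPN' : Disjoint (GammaPos S' j τ') (GammaNeg S' j τ') := by
    rw [Set.disjoint_iff_inter_eq_empty]
    ext z
    simp only [Set.mem_inter_iff, Set.mem_empty_iff_false, iff_false]
    rintro ⟨⟨_, h1⟩, ⟨_, h2⟩⟩
    exact lt_asymm h1 h2
  have hPos'or := hsep'.2.1.isPreconnected.subset_or_subset hUopen hVopen hdisjUV hPos'sub
  have hNeg'or := hsep'.2.2.isPreconnected.subset_or_subset hUopen hVopen hdisjUV hNeg'sub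
  have hUsub : U ⊆ GammaPos S' j τ' ∪ GammaNeg S' j τ' := by
    intro w hw
    have hw' : w ∈ S' \ Gamma S' j τ' := hUVeq ▸ Or.inl hw
    rcases lt_trichotomy (w j) τ' with hlt | heq | hgt
    · exact Or.inr ⟨hw'.1, hlt⟩
    · exact absurd ⟨hw'.1, heq⟩ hw'.2
    · exact Or.inl ⟨hw'.1, hgt⟩
  have hVsub : V ⊆ GammaPos S' j τ' ∪ GammaNeg S' j τ' := by
    intro w hw
    have hw' : w ∈ S' \ Gamma S' j τ' := hUVeq ▸ Or.inr hw
    rcases lt_trichotomy (w j) τ' with hlt | heq | hgt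
    · exact Or.inr ⟨hw'.1, hlt⟩
    · exact absurd ⟨hw'.1, heq⟩ hw'.2
    · exact Or.inl ⟨hw'.1, hgt⟩
  have hUconn : IsPreconnected U :=
    (hsep.2.1.image h (hd.smooth.continuousOn.mono hPosS)).isPreconnected
  have hVconn : IsPreconnected V :=
    (hsep.2.2.image h (hd.smooth.continuousOn.mono hNegS)).isPreconnected
  have hUor := hUconn.subset_or_subset (EHD.gammaPos_open hS' j τ')
    (EHD.gammaNeg_open hS' j τ') hdisjPN' hUsub
  have hVor := hVconn.subset_or_subset (EHD.gammaPos_open hS' j τ')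
    (EHD.gammaNeg_open hS' j τ') hdisjPN' hVsub
  rcases hPos'or with hP | hP
  · have hUP : U = GammaPos S' j τ' := by
      rcases hUor with h1 | h1
      · exact Set.Subset.antisymm h1 hP
      · exfalso
        obtain ⟨w, hw⟩ := hsep'.2.1.nonempty
        exact Set.disjoint_left.mp hdisjPN' hw (h1 (hP hw))
    have hVN : V = GammaNeg S' j τ' := by
      rcases hNeg'or with h2 | h2
      · exfalso
        obtain ⟨w, hw⟩ := hVne
        have : w ∈ U := by
          rcases hVsub hw with h3 | h3
          · exact hUP ▸ h3
          · exact h2 h3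
        exact Set.disjoint_left.mp hdisjUV this hw
      · rcases hVor with h3 | h3
        · exfalso
          obtain ⟨w, hw⟩ := hVne
          exact Set.disjoint_left.mp hdisjUV (hUP ▸ h3 hw) hw
        · exact Set.Subset.antisymm h3 h2
    exact Or.inl ⟨hVN, hUP⟩
  · have hVP : V = GammaPos S' j τ' := by
      rcases hVor with h1 | h1
      · exact Set.Subset.antisymm h1 hP
      · exfalso
        obtain ⟨w, hw⟩ := hsep'.2.1.nonempty
        exact Set.disjoint_left.mp hdisjPN' hw (h1 (hP hw))
    have hUN : U = GammaNeg S' j τ' := by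
      rcases hNeg'or with h2 | h2
      · rcases hUor with h3 | h3
        · exfalso
          obtain ⟨w, hw⟩ := hUne
          exact Set.disjoint_left.mp hdisjUV hw (hVP ▸ h3 hw)
        · exact Set.Subset.antisymm h3 h2
      · exfalso
        obtain ⟨w, hw⟩ := hUne
        have : w ∈ V := by
          rcases hUsub hw with h3 | h3
          · exact hVP ▸ h3
          · exact h2 h3
        exact Set.disjoint_left.mp hdisjUV hw this
    exact Or.inr ⟨hVP, hUN⟩

lemma EHD.A_cast {d : ℕ} (κ : Fin d → ℕ) (f : (x : Fin d) → Fin (κ x) → ℝ)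
    {x y : Fin d} (hxy : x = y) (c : Fin (κ x)) :
    f y (Fin.cast (congrArg κ hxy) c) = f x c := by
  subst hxy
  congr 1

end EHDAux

/-- **Extremal-half dichotomy (order preserved or reversed).** -/
theorem extremal_half_dichotomy
    {d : ℕ} {S S' : Set (Euc d)} (hS : IsOpen S) (hSc : IsConnected S)
    (hS' : IsOpen S') (hS'c : IsConnected S')
    {h hinv : Euc d → Euc d} (hdiff : IsSmoothDiffeoOn h hinv S S')
    (CA : DiscreteCoordination S) (hbb : CA.HasBackbone)
    (CB : DiscreteCoordination S')
    (hgrid : h '' CA.grid = CB.grid) :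
    ∃ σ : Equiv.Perm (Fin d), ∀ i : Fin d,
      CA.n i = CB.n (σ i) ∧
      Xor'
        (h '' GammaNeg S i (CA.A i ⟨0, CA.n_pos i⟩) =
            GammaNeg S' (σ i) (CB.A (σ i) ⟨0, CB.n_pos (σ i)⟩) ∧
         h '' GammaPos S i (CA.A i ⟨CA.n i - 1, Nat.sub_lt (CA.n_pos i) Nat.one_pos⟩) =
            GammaPos S' (σ i) (CB.A (σ i) ⟨CB.n (σ i) - 1, Nat.sub_lt (CB.n_pos (σ i)) Nat.one_pos⟩))
        (h '' GammaNeg S i (CA.A i ⟨0, CA.n_pos i⟩) =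
            GammaPos S' (σ i) (CB.A (σ i) ⟨CB.n (σ i) - 1, Nat.sub_lt (CB.n_pos (σ i)) Nat.one_pos⟩) ∧
         h '' GammaPos S i (CA.A i ⟨CA.n i - 1, Nat.sub_lt (CA.n_pos i) Nat.one_pos⟩) =
            GammaNeg S' (σ i) (CB.A (σ i) ⟨0, CB.n_pos (σ i)⟩)) := by
  classical
  -- grid inclusion facts
  have hgridA_sub : CA.grid ⊆ S := by
    intro z hz
    simp only [DiscreteCoordination.grid, Set.mem_iUnion] at hz
    obtain ⟨i, k, hz⟩ := hz
    exact hz.1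
  have hinvgrid : hinv '' CB.grid = CA.grid := by
    rw [← hgrid, EHD.diffeo_img_img hdiff hgridA_sub]
  have hmapsA : ∀ (i : Fin d) (k : Fin (CA.n i)), ∀ z ∈ Gamma S i (CA.A i k),
      h z ∈ CB.grid := by
    intro i k z hz
    rw [← hgrid]
    exact ⟨z, Set.mem_iUnion.mpr ⟨i, Set.mem_iUnion.mpr ⟨k, hz⟩⟩, rfl⟩
  have hmapsB : ∀ (j : Fin d) (c : Fin (CB.n j)), ∀ z ∈ Gamma S' j (CB.A j c),
      hinv z ∈ CA.grid := by
    intro j c z hz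
    rw [← hinvgrid]
    exact ⟨z, Set.mem_iUnion.mpr ⟨j, Set.mem_iUnion.mpr ⟨c, hz⟩⟩, rfl⟩
  -- choose image separators for both directions
  have hαex : ∀ (i : Fin d) (k : Fin (CA.n i)), ∃ j c, ∀ z ∈ Gamma S i (CA.A i k),
      h z ∈ Gamma S' j (CB.A j c) :=
    fun i k => EHD.sep_image_plane hS hS' hdiff CB i (CA.A i k) (CA.sep i k).1 (hmapsA i k)
  choose αj αc hα using hαex
  have hβex : ∀ (j : Fin d) (c : Fin (CB.n j)), ∃ i k, ∀ z ∈ Gamma S' j (CB.A j c),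
      hinv z ∈ Gamma S i (CA.A i k) :=
    fun j c => EHD.sep_image_plane hS' hS (EHD.diffeoSymm hdiff) CA j (CB.A j c)
      (CB.sep j c).1 (hmapsB j c)
  choose βj βc hβ using hβex
  -- basics
  have hΓne : ∀ (i : Fin d) (k : Fin (CA.n i)), (Gamma S i (CA.A i k)).Nonempty :=
    fun i k => (CA.sep i k).1.nonempty
  have hΔne : ∀ (j : Fin d) (c : Fin (CB.n j)), (Gamma S' j (CB.A j c)).Nonempty :=
    fun j c => (CB.sep j c).1.nonempty
  have hΓsub : ∀ (i : Fin d) (k : Fin (CA.n i)), Gamma S i (CA.A i k) ⊆ S :=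
    fun i k z hz => hz.1
  have hΔsub : ∀ (j : Fin d) (c : Fin (CB.n j)), Gamma S' j (CB.A j c) ⊆ S' :=
    fun j c z hz => hz.1
  have hImgSub : ∀ (i : Fin d) (k : Fin (CA.n i)),
      h '' Gamma S i (CA.A i k) ⊆ Gamma S' (αj i k) (CB.A (αj i k) (αc i k)) := by
    rintro i k _ ⟨z, hz, rfl⟩
    exact hα i k z hz
  -- β ∘ α identity
  have hβα : ∀ (i : Fin d) (k : Fin (CA.n i)),
      βj (αj i k) (αc i k) = i ∧
      CA.A (βj (αj i k) (αc i k)) (βc (αj i k) (αc i k)) = CA.A i k := by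
    intro i k
    have hsub : Gamma S i (CA.A i k) ⊆
        Gamma S (βj (αj i k) (αc i k)) (CA.A _ (βc (αj i k) (αc i k))) := by
      intro z hz
      have h1 := hα i k z hz
      have h2 := hβ (αj i k) (αc i k) (h z) h1
      rwa [hdiff.left_inv z hz.1] at h2
    have := EHD.gamma_nested hS (hΓne i k) hsub
    exact ⟨this.1.symm, this.2.symm⟩
  -- image equality
  have hImgEq : ∀ (i : Fin d) (k : Fin (CA.n i)),
      h '' Gamma S i (CA.A i k) = Gamma S' (αj i k) (CB.A (αj i k) (αc i k)) := by
    intro i k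
    apply Set.Subset.antisymm (hImgSub i k)
    have h1 : hinv '' Gamma S' (αj i k) (CB.A (αj i k) (αc i k)) ⊆
        Gamma S i (CA.A i k) := by
      rintro _ ⟨w, hw, rfl⟩
      have h2 := hβ (αj i k) (αc i k) w hw
      obtain ⟨hβ1, hβ2⟩ := hβα i k
      refine ⟨h2.1, ?_⟩
      calc hinv w i = hinv w (βj (αj i k) (αc i k)) := by rw [hβ1]
        _ = CA.A (βj (αj i k) (αc i k)) (βc (αj i k) (αc i k)) := h2.2
        _ = CA.A i k := hβ2
    calc Gamma S' (αj i k) (CB.A (αj i k) (αc i k))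
        = h '' (hinv '' Gamma S' (αj i k) (CB.A (αj i k) (αc i k))) :=
          (EHD.diffeo_img_img (EHD.diffeoSymm hdiff) (hΔsub _ _)).symm
      _ ⊆ h '' Gamma S i (CA.A i k) := Set.image_mono h1
  -- α ∘ β identity
  have hαβ : ∀ (j : Fin d) (c : Fin (CB.n j)),
      αj (βj j c) (βc j c) = j ∧
      CB.A (αj (βj j c) (βc j c)) (αc (βj j c) (βc j c)) = CB.A j c := by
    intro j c
    have hsub : Gamma S' j (CB.A j c) ⊆
        Gamma S' (αj (βj j c) (βc j c)) (CB.A _ (αc (βj j c) (βc j c))) := by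
      intro w hw
      have h1 := hβ j c w hw
      have h2 := hα (βj j c) (βc j c) (hinv w) h1
      rwa [hdiff.right_inv w hw.1] at h2
    have := EHD.gamma_nested hS' (hΔne j c) hsub
    exact ⟨this.1.symm, this.2.symm⟩
  -- representation of B-separators as images
  have hΔrep : ∀ (j : Fin d) (c : Fin (CB.n j)),
      Gamma S' j (CB.A j c) = h '' Gamma S (βj j c) (CA.A (βj j c) (βc j c)) := by
    intro j c
    rw [hImgEq (βj j c) (βc j c)]
    exact (EHD.gamma_congr (hαβ j c).1 (hαβ j c).2).symm
  -- the backbone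
  obtain ⟨kstar, ⟨zc, hzc⟩, hbbint⟩ := hbb
  set σ0 : Fin d → Fin d := fun i => αj i (kstar i) with hσ0
  -- intersecting separators with equal image-axes coincide
  have hIntEq : ∀ (i : Fin d) (k : Fin (CA.n i)) (i' : Fin d) (k' : Fin (CA.n i')),
      (Gamma S i (CA.A i k) ∩ Gamma S i' (CA.A i' k')).Nonempty →
      αj i k = αj i' k' → i = i' := by
    rintro i k i' k' ⟨z, hz1, hz2⟩ haxeq
    have hw1 := hα i k z hz1
    have hw2 := hα i' k' z hz2
    have hval : CB.A (αj i k) (αc i k) = CB.A (αj i' k') (αc i' k') := by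
      rw [← hw1.2, ← hw2.2, haxeq]
    have hsets : Gamma S' (αj i k) (CB.A (αj i k) (αc i k)) =
        Gamma S' (αj i' k') (CB.A (αj i' k') (αc i' k')) :=
      EHD.gamma_congr haxeq hval
    have hΓeq : Gamma S i (CA.A i k) = Gamma S i' (CA.A i' k') := by
      have e1 : h '' Gamma S i (CA.A i k) = h '' Gamma S i' (CA.A i' k') := by
        rw [hImgEq i k, hImgEq i' k', hsets]
      have e2 := congrArg (fun X => hinv '' X) e1
      rwa [EHD.diffeo_img_img hdiff (hΓsub i k),
        EHD.diffeo_img_img hdiff (hΓsub i' k')] at e2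
    exact (EHD.gamma_nested hS (hΓne i k) hΓeq.subset).1
  -- σ0 injective
  have hσinj : Function.Injective σ0 := by
    intro i i' heq
    by_contra hne
    have hint := hbbint i i' (fun hh => hne hh.symm) (kstar i')
    exact hne (hIntEq i (kstar i) i' (kstar i') hint heq)
  have hσbij : Function.Bijective σ0 := Finite.injective_iff_bijective.mp hσinj
  -- axis constancy
  have haxis : ∀ (i : Fin d) (k : Fin (CA.n i)), αj i k = σ0 i := by
    intro i k
    obtain ⟨i'', hi''⟩ := hσbij.2 (αj i k)
    by_cases hii : i'' = i
    · rw [← hi'', hii]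
    · exfalso
      have hint : (Gamma S i'' (CA.A i'' (kstar i'')) ∩ Gamma S i (CA.A i k)).Nonempty :=
        hbbint i'' i (fun hh => hii hh.symm) k
      exact hii (hIntEq i'' (kstar i'') i k hint hi'')
  -- casted α-index
  set αc' : (i : Fin d) → Fin (CA.n i) → Fin (CB.n (σ0 i)) :=
    fun i k => Fin.cast (congrArg CB.n (haxis i k)) (αc i k) with hαc'
  have hαval : ∀ (i : Fin d) (k : Fin (CA.n i)),
      CB.A (σ0 i) (αc' i k) = CB.A (αj i k) (αc i k) :=
    fun i k => EHD.A_cast CB.n CB.A (haxis i k) (αc i k)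
  have hImgEq' : ∀ (i : Fin d) (k : Fin (CA.n i)),
      h '' Gamma S i (CA.A i k) = Gamma S' (σ0 i) (CB.A (σ0 i) (αc' i k)) := by
    intro i k
    rw [hImgEq i k]
    exact EHD.gamma_congr (haxis i k) (hαval i k).symm
  -- image equality implies Γ equality
  have hCancel : ∀ (X Y : Set (Euc d)), X ⊆ S → Y ⊆ S → h '' X = h '' Y → X = Y := by
    intro X Y hX hY he
    have := congrArg (fun Z => hinv '' Z) he
    rwa [EHD.diffeo_img_img hdiff hX, EHD.diffeo_img_img hdiff hY] at this
  -- β index lands on the same axis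
  have hβi : ∀ (i : Fin d) (c : Fin (CB.n (σ0 i))), βj (σ0 i) c = i := by
    intro i c
    have h1 := (hαβ (σ0 i) c).1
    have h2 := haxis (βj (σ0 i) c) (βc (σ0 i) c)
    exact hσinj (by rw [← h2, h1])
  -- counting
  have hcount : ∀ i : Fin d, CA.n i = CB.n (σ0 i) := by
    intro i
    have hval_eq : ∀ k : Fin (CA.n i),
        CA.A i k = CA.A i k → True := fun _ _ => trivial
    have hinj1 : Function.Injective (αc' i) := by
      intro k k' hkk
      have hsets : Gamma S' (σ0 i) (CB.A (σ0 i) (αc' i k)) =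
          Gamma S' (σ0 i) (CB.A (σ0 i) (αc' i k')) := by rw [hkk]
      have hΓeq : Gamma S i (CA.A i k) = Gamma S i (CA.A i k') :=
        hCancel _ _ (hΓsub i k) (hΓsub i k')
          (by rw [hImgEq' i k, hImgEq' i k', hsets])
      have := (EHD.gamma_nested hS (hΓne i k) hΓeq.subset).2
      exact (CA.mono i).injective this
    have hinj2 : Function.Injective
        (fun c : Fin (CB.n (σ0 i)) => Fin.cast (congrArg CA.n (hβi i c)) (βc (σ0 i) c)) := by
      intro c c' hcc
      have hcc' : Fin.cast (congrArg CA.n (hβi i c)) (βc (σ0 i) c) =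
          Fin.cast (congrArg CA.n (hβi i c')) (βc (σ0 i) c') := hcc
      have hv1 : CA.A i (Fin.cast (congrArg CA.n (hβi i c)) (βc (σ0 i) c)) =
          CA.A (βj (σ0 i) c) (βc (σ0 i) c) := EHD.A_cast CA.n CA.A (hβi i c) _
      have hv2 : CA.A i (Fin.cast (congrArg CA.n (hβi i c')) (βc (σ0 i) c')) =
          CA.A (βj (σ0 i) c') (βc (σ0 i) c') := EHD.A_cast CA.n CA.A (hβi i c') _
      have hval : CA.A (βj (σ0 i) c) (βc (σ0 i) c) =
          CA.A (βj (σ0 i) c') (βc (σ0 i) c') := by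
        rw [← hv1, ← hv2, hcc']
      have hsets : Gamma S' (σ0 i) (CB.A (σ0 i) c) = Gamma S' (σ0 i) (CB.A (σ0 i) c') := by
        rw [hΔrep (σ0 i) c, hΔrep (σ0 i) c']
        exact congrArg (fun X => h '' X)
          (EHD.gamma_congr ((hβi i c).trans (hβi i c').symm) hval)
      have hvals' : CB.A (σ0 i) c = CB.A (σ0 i) c' := by
        obtain ⟨w, hw⟩ := hΔne (σ0 i) c
        have hw' : w ∈ Gamma S' (σ0 i) (CB.A (σ0 i) c') := hsets ▸ hw
        rw [← hw.2, hw'.2]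
      exact (CB.mono (σ0 i)).injective hvals'
    have c1 := Fintype.card_le_of_injective _ hinj1
    have c2 := Fintype.card_le_of_injective _ hinj2
    simp only [Fintype.card_fin] at c1 c2
    exact le_antisymm c1 c2
  -- the permutation
  refine ⟨Equiv.ofBijective σ0 hσbij, fun i => ?_⟩
  have hσi : (Equiv.ofBijective σ0 hσbij) i = σ0 i := rfl
  rw [hσi]
  refine ⟨hcount i, ?_⟩
  -- notation
  set j : Fin d := σ0 i with hjdef
  set k0 : Fin (CA.n i) := ⟨0, CA.n_pos i⟩ with hk0
  set kl : Fin (CA.n i) := ⟨CA.n i - 1, Nat.sub_lt (CA.n_pos i) Nat.one_pos⟩ with hkl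
  set c0 : Fin (CB.n j) := ⟨0, CB.n_pos j⟩ with hc0
  set cl : Fin (CB.n j) := ⟨CB.n j - 1, Nat.sub_lt (CB.n_pos j) Nat.one_pos⟩ with hcl
  set N0 : Set (Euc d) := GammaNeg S i (CA.A i k0) with hN0
  set Pl : Set (Euc d) := GammaPos S i (CA.A i kl) with hPl
  set N0' : Set (Euc d) := GammaNeg S' j (CB.A j c0) with hN0'
  set Pl' : Set (Euc d) := GammaPos S' j (CB.A j cl) with hPl'
  -- monotone facts
  have hk0le : ∀ k : Fin (CA.n i), CA.A i k0 ≤ CA.A i k := by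
    intro k
    exact (CA.mono i).monotone (by exact Fin.mk_le_of_le_val (Nat.zero_le _))
  have hklge : ∀ k : Fin (CA.n i), CA.A i k ≤ CA.A i kl := by
    intro k
    apply (CA.mono i).monotone
    have := k.isLt
    exact Fin.le_def.mpr (by simp [hkl]; omega)
  have hc0le : ∀ c : Fin (CB.n j), CB.A j c0 ≤ CB.A j c := by
    intro c
    exact (CB.mono j).monotone (by exact Fin.mk_le_of_le_val (Nat.zero_le _))
  have hclge : ∀ c : Fin (CB.n j), CB.A j c ≤ CB.A j cl := by
    intro c
    apply (CB.mono j).monotone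
    have := c.isLt
    exact Fin.le_def.mpr (by simp [hcl]; omega)
  -- nonempties
  have hN0ne : N0.Nonempty := (CA.sep i k0).2.2.nonempty
  have hPlne : Pl.Nonempty := (CA.sep i kl).2.1.nonempty
  have hN0'ne : N0'.Nonempty := (CB.sep j c0).2.2.nonempty
  have hPl'ne : Pl'.Nonempty := (CB.sep j cl).2.1.nonempty
  -- Gamma-sets avoid extremal halves
  have himpossible_N0 : ∀ c : Fin (CB.n j), ¬ (Gamma S' j (CB.A j c) ⊆ h '' N0) := by
    intro c hsub
    have hrep := hΔrep j c
    have h1 : h '' Gamma S (βj j c) (CA.A (βj j c) (βc j c)) ⊆ h '' N0 := hrep ▸ hsub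
    have h2 : Gamma S (βj j c) (CA.A (βj j c) (βc j c)) ⊆ N0 := by
      have := Set.image_mono (f := hinv) h1
      rwa [EHD.diffeo_img_img hdiff (hΓsub _ _),
        EHD.diffeo_img_img hdiff (fun z hz => hz.1)] at this
    obtain ⟨z, hz⟩ := hΓne (βj j c) (βc j c)
    have hzN0 : z ∈ N0 := h2 hz
    have hzval : z i = CA.A (βj j c) (βc j c) := by
      rw [show z i = z (βj j c) by rw [hβi i c]]
      exact hz.2
    have hge : CA.A i k0 ≤ CA.A (βj j c) (βc j c) := by
      have := hk0le (Fin.cast (congrArg CA.n (hβi i c)) (βc j c))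
      rwa [EHD.A_cast CA.n CA.A (hβi i c) (βc j c)] at this
    have hlt : z i < CA.A i k0 := hzN0.2
    rw [hzval] at hlt
    linarith
  have himpossible_Pl : ∀ c : Fin (CB.n j), ¬ (Gamma S' j (CB.A j c) ⊆ h '' Pl) := by
    intro c hsub
    have hrep := hΔrep j c
    have h1 : h '' Gamma S (βj j c) (CA.A (βj j c) (βc j c)) ⊆ h '' Pl := hrep ▸ hsub
    have h2 : Gamma S (βj j c) (CA.A (βj j c) (βc j c)) ⊆ Pl := by
      have := Set.image_mono (f := hinv) h1
      rwa [EHD.diffeo_img_img hdiff (hΓsub _ _),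
        EHD.diffeo_img_img hdiff (fun z hz => hz.1)] at this
    obtain ⟨z, hz⟩ := hΓne (βj j c) (βc j c)
    have hzPl : z ∈ Pl := h2 hz
    have hzval : z i = CA.A (βj j c) (βc j c) := by
      rw [show z i = z (βj j c) by rw [hβi i c]]
      exact hz.2
    have hle : CA.A (βj j c) (βc j c) ≤ CA.A i kl := by
      have := hklge (Fin.cast (congrArg CA.n (hβi i c)) (βc j c))
      rwa [EHD.A_cast CA.n CA.A (hβi i c) (βc j c)] at this
    have hgt : CA.A i kl < z i := hzPl.2
    rw [hzval] at hgt
    linarith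
  -- determination of extremal indices
  have hcase_neg : ∀ (X : Set (Euc d)), X.Nonempty → (¬ ∀ c, ¬ (Gamma S' j (CB.A j c) ⊆ h '' X)) → True := fun _ _ _ => trivial
  have hc00 : h '' N0 = GammaNeg S' j (CB.A j (αc' i k0)) → h '' N0 = N0' := by
    intro he
    have hceq : αc' i k0 = c0 := by
      by_contra hne
      have hlt : c0 < αc' i k0 := by
        have hv : (αc' i k0).val ≠ 0 := fun h0 => hne (Fin.ext h0)
        exact Fin.lt_def.mpr (Nat.pos_of_ne_zero hv)
      have hvlt : CB.A j c0 < CB.A j (αc' i k0) := CB.mono j hlt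
      apply himpossible_N0 c0
      intro w hw
      rw [he]
      exact ⟨hw.1, by rw [hw.2]; exact hvlt⟩
    rw [he, hceq]
  have hc0l : h '' N0 = GammaPos S' j (CB.A j (αc' i k0)) → h '' N0 = Pl' := by
    intro he
    have hceq : αc' i k0 = cl := by
      by_contra hne
      have hlt : αc' i k0 < cl := by
        have hv : (αc' i k0).val ≠ CB.n j - 1 := fun h0 => hne (Fin.ext h0)
        have h1 : (αc' i k0).val < CB.n j := (αc' i k0).isLt
        exact Fin.lt_def.mpr (show (αc' i k0).val < CB.n j - 1 by omega)
      have hvlt : CB.A j (αc' i k0) < CB.A j cl := CB.mono j hlt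
      apply himpossible_N0 cl
      intro w hw
      rw [he]
      exact ⟨hw.1, by rw [hw.2]; exact hvlt⟩
    rw [he, hceq]
  have hcll : h '' Pl = GammaPos S' j (CB.A j (αc' i kl)) → h '' Pl = Pl' := by
    intro he
    have hceq : αc' i kl = cl := by
      by_contra hne
      have hlt : αc' i kl < cl := by
        have hv : (αc' i kl).val ≠ CB.n j - 1 := fun h0 => hne (Fin.ext h0)
        have h1 : (αc' i kl).val < CB.n j := (αc' i kl).isLt
        exact Fin.lt_def.mpr (show (αc' i kl).val < CB.n j - 1 by omega)
      have hvlt : CB.A j (αc' i kl) < CB.A j cl := CB.mono j hlt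
      apply himpossible_Pl cl
      intro w hw
      rw [he]
      exact ⟨hw.1, by rw [hw.2]; exact hvlt⟩
    rw [he, hceq]
  have hcl0 : h '' Pl = GammaNeg S' j (CB.A j (αc' i kl)) → h '' Pl = N0' := by
    intro he
    have hceq : αc' i kl = c0 := by
      by_contra hne
      have hlt : c0 < αc' i kl := by
        have hv : (αc' i kl).val ≠ 0 := fun h0 => hne (Fin.ext h0)
        exact Fin.lt_def.mpr (Nat.pos_of_ne_zero hv)
      have hvlt : CB.A j c0 < CB.A j (αc' i kl) := CB.mono j hlt
      apply himpossible_Pl c0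
      intro w hw
      rw [he]
      exact ⟨hw.1, by rw [hw.2]; exact hvlt⟩
    rw [he, hceq]
  -- contradictions
  have hN0'ne_Pl' : N0' ≠ Pl' := by
    intro he
    obtain ⟨w, hw⟩ := hN0'ne
    have hw2 : w ∈ Pl' := he ▸ hw
    have h1 : w j < CB.A j c0 := hw.2
    have h2 : CB.A j cl < w j := hw2.2
    have h3 : CB.A j c0 ≤ CB.A j cl := hclge c0
    linarith
  have hN0nePl : h '' N0 = h '' Pl → False := by
    intro he
    have := hCancel N0 Pl (fun z hz => hz.1) (fun z hz => hz.1) he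
    obtain ⟨z, hz⟩ := hN0ne
    have hz2 : z ∈ Pl := this ▸ hz
    have h1 : z i < CA.A i k0 := hz.2
    have h2 : CA.A i kl < z i := hz2.2
    have h3 : CA.A i k0 ≤ CA.A i kl := hklge k0
    linarith
  -- the dichotomies
  have hd0 := EHD.half_dichotomy hS hS' hdiff (CA.sep i k0) (CB.sep j (αc' i k0))
    (hImgEq' i k0)
  have hdl := EHD.half_dichotomy hS hS' hdiff (CA.sep i kl) (CB.sep j (αc' i kl))
    (hImgEq' i kl)
  rcases hd0 with ⟨hn0, _⟩ | ⟨hn0, _⟩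
  · -- h '' N0 is the negative half
    have hA : h '' N0 = N0' := hc00 hn0
    rcases hdl with ⟨_, hpl⟩ | ⟨_, hpl⟩
    · -- h '' Pl is the positive half
      have hB : h '' Pl = Pl' := hcll hpl
      left
      refine ⟨⟨hA, hB⟩, ?_⟩
      rintro ⟨r1, _⟩
      exact hN0'ne_Pl' (hA.symm.trans r1)
    · -- impossible
      exfalso
      have hB : h '' Pl = N0' := hcl0 hpl
      exact hN0nePl (hA.trans hB.symm)
  · -- h '' N0 is the positive half
    have hA : h '' N0 = Pl' := hc0l hn0
    rcases hdl with ⟨_, hpl⟩ | ⟨_, hpl⟩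
    · exfalso
      have hB : h '' Pl = Pl' := hcll hpl
      exact hN0nePl (hA.trans hB.symm)
    · have hB : h '' Pl = N0' := hcl0 hpl
      right
      refine ⟨⟨hA, hB⟩, ?_⟩
      rintro ⟨l1, _⟩
      exact hN0'ne_Pl' (l1.symm.trans hA)
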